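/- Consider the network Σ(m) of classical conditioning gates with unit training time s, state X(t) = X̄ with X̄ ∈ {YES, OR}^n arbitrary, and a node (p,q). If x_{pq}(t) = OR and the external input is U(t) = Û_{(p,q)}, then the inputs of the layer-p nodes satisfy (v_{pq}(t), w_{pq}(t)) = (0,1) and (v_{pj}(t), w_{pj}(t)) = (0,0) for every j ∈ {1,...,n_p} \ {q}; if instead x_{pq}(t) = YES, then (v_{pq}(t), w_{pq}(t)) = (1,1) and (v_{pj}(t), w_{pj}(t)) = (0,0) for every j ∈ {1,...,n_p} \ {q}. -/

import Mathlib

/-- The state of a classical conditioning gate: logical YES or logical OR. -/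
inductive GateState : Type
  | YES : GateState
  | OR  : GateState
  deriving DecidableEq, Repr

/-- Output of a single classical conditioning gate:
`y = v` when the state is YES, and `y = v ∨ w` when the state is OR. -/
def gateOut : GateState → Bool → Bool → Bool
  | GateState.YES, v, _ => v
  | GateState.OR,  v, w => v || w

open Classical in
/-- A trajectory of a single classical conditioning gate with unit training time `s`,
inputs `v w : ℕ → Bool`, state `x : ℕ → GateState`, and output `y : ℕ → Bool`:
the output equation and the state-update equation of the model. -/
def GateTraj (s : ℕ) (v w : ℕ → Bool) (x : ℕ → GateState) (y : ℕ → Bool) : Prop :=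
  (∀ t : ℕ, y t = gateOut (x t) (v t) (w t)) ∧
  (∀ t : ℕ, x (t + 1) =
    if x (t + 1 - s) = GateState.YES ∧
        (∀ τ ∈ Finset.Icc (t + 1 - s) t, v τ = true ∧ w τ = true) then
      GateState.OR
    else if x (t + 1 - s) = GateState.OR ∧
        (∀ τ ∈ Finset.Icc (t + 1 - s) t, v τ = false ∧ w τ = true) then
      GateState.YES
    else
      x t)

/-- Output of node `(i,j)` of the binary-tree network `Σ(m)` of classical
conditioning gates, given the snapshot `X` of the gate states (`X i j` is the
state of node `(i,j)`, indices 1-based) and the external input `U` (1-based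
ports: `v₁ⱼ = U (2j-1)`, `w₁ⱼ = U (2j)`).  Layer `0` is, by convention, the
external ports themselves: `netY X U 0 k = U k`. -/
def netY (X : ℕ → ℕ → GateState) (U : ℕ → Bool) : ℕ → ℕ → Bool
  | 0, j => U j
  | i + 1, j => gateOut (X (i + 1) j) (netY X U i (2 * j - 1)) (netY X U i (2 * j))

/-- First input `v_{ij}` of node `(i,j)`: the output of node `(i-1, 2j-1)`
(for `i = 1`, the external port `2j-1`). -/
def nodeV (X : ℕ → ℕ → GateState) (U : ℕ → Bool) (i j : ℕ) : Bool :=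
  netY X U (i - 1) (2 * j - 1)

/-- Second input `w_{ij}` of node `(i,j)`: the output of node `(i-1, 2j)`
(for `i = 1`, the external port `2j`). -/
def nodeW (X : ℕ → ℕ → GateState) (U : ℕ → Bool) (i j : ℕ) : Bool :=
  netY X U (i - 1) (2 * j)

open Classical in
/-- A trajectory of the network `Σ(m)` of classical conditioning gates, all with
unit training time `s`: `U t k` is the external input at time `t` on port `k`
(`k = 1, …, 2^m`), and `X t i j` is the state of node `(i,j)` at time `t`
(`i = 1, …, m`, `j = 1, …, 2^(m-i)`).  Every node obeys the state-update
equation of the classical conditioning gate, its inputs being delivered by the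
outputs of the previous layer (resp. the external input, for layer 1). -/
def NetTraj (m s : ℕ) (U : ℕ → ℕ → Bool) (X : ℕ → ℕ → ℕ → GateState) : Prop :=
  ∀ i j : ℕ, 1 ≤ i → i ≤ m → 1 ≤ j → j ≤ 2 ^ (m - i) →
    ∀ t : ℕ, X (t + 1) i j =
      if X (t + 1 - s) i j = GateState.YES ∧
          (∀ τ ∈ Finset.Icc (t + 1 - s) t,
            nodeV (X τ) (U τ) i j = true ∧ nodeW (X τ) (U τ) i j = true) then
        GateState.OR
      else if X (t + 1 - s) i j = GateState.OR ∧
          (∀ τ ∈ Finset.Icc (t + 1 - s) t,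
            nodeV (X τ) (U τ) i j = false ∧ nodeW (X τ) (U τ) i j = true) then
        GateState.YES
      else
        X t i j

/-- The flipped value of a gate state. -/
def flipState : GateState → GateState
  | GateState.YES => GateState.OR
  | GateState.OR  => GateState.YES

/-- The training input value `Û_{(p,q)}` for flipping node `(p,q)` whose current
state is `xpq`: the external input (1-based ports `1, …, 2^m`) is divided into
`2^(m+1-p)` consecutive blocks of equal size `2^(p-1)`; block `2q-1` is
`(0,…,0)` if `xpq = OR` and `(1,0,…,0)` if `xpq = YES`, block `2q` is
`(1,0,…,0)`, and all other blocks are `(0,…,0)`. -/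
def Uhat (p q : ℕ) (xpq : GateState) (k : ℕ) : Bool :=
  if (k - 1) / 2 ^ (p - 1) + 1 = 2 * q - 1 then
    decide (xpq = GateState.YES) && decide ((k - 1) % 2 ^ (p - 1) = 0)
  else if (k - 1) / 2 ^ (p - 1) + 1 = 2 * q then
    decide ((k - 1) % 2 ^ (p - 1) = 0)
  else
    false


/-- If all external ports feeding node `(i,r)` (0-based layer `i` of `netY`)
are `false`, then its output is `false`. -/
lemma netY_zero (X : ℕ → ℕ → GateState) (U : ℕ → Bool) :
    ∀ i r : ℕ, 1 ≤ r → (∀ o < 2 ^ i, U (2 ^ i * (r - 1) + 1 + o) = false) →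
    netY X U i r = false := by
  intro i
  induction i with
  | zero =>
    intro r hr h
    have h0 := h 0 (by norm_num)
    have e : 2 ^ 0 * (r - 1) + 1 + 0 = r := by simp; omega
    rw [e] at h0
    simpa [netY] using h0
  | succ i ih =>
    intro r hr h
    have hpow : 2 ^ i ≤ 2 ^ (i + 1) := Nat.pow_le_pow_right (by norm_num) (by omega)
    have hA : netY X U i (2 * r - 1) = false := by
      apply ih (2 * r - 1) (by omega)
      intro o ho
      have e : 2 ^ i * (2 * r - 1 - 1) + 1 + o = 2 ^ (i + 1) * (r - 1) + 1 + o := by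
        have h1 : 2 * r - 1 - 1 = 2 * (r - 1) := by omega
        rw [h1, pow_succ]; ring
      rw [e]
      exact h o (by omega)
    have hB : netY X U i (2 * r) = false := by
      apply ih (2 * r) (by omega)
      intro o ho
      have e : 2 ^ i * (2 * r - 1) + 1 + o = 2 ^ (i + 1) * (r - 1) + 1 + (2 ^ i + o) := by
        have h1 : 2 * r - 1 = 2 * (r - 1) + 1 := by omega
        rw [h1, pow_succ]; ring
      rw [e]
      exact h (2 ^ i + o) (by rw [pow_succ]; omega)
    show gateOut (X (i + 1) r) (netY X U i (2 * r - 1)) (netY X U i (2 * r)) = false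
    rw [hA, hB]
    cases X (i + 1) r <;> simp [gateOut]

/-- If the first external port feeding node `(i,r)` is `true`, then its output
is `true`. -/
lemma netY_first (X : ℕ → ℕ → GateState) (U : ℕ → Bool) :
    ∀ i r : ℕ, 1 ≤ r → U (2 ^ i * (r - 1) + 1) = true → netY X U i r = true := by
  intro i
  induction i with
  | zero =>
    intro r hr h
    have e : 2 ^ 0 * (r - 1) + 1 = r := by simp; omega
    rw [e] at h
    simpa [netY] using h
  | succ i ih =>
    intro r hr h
    have hA : netY X U i (2 * r - 1) = true := by
      apply ih (2 * r - 1) (by omega)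
      have e : 2 ^ i * (2 * r - 1 - 1) + 1 = 2 ^ (i + 1) * (r - 1) + 1 := by
        have h1 : 2 * r - 1 - 1 = 2 * (r - 1) := by omega
        rw [h1, pow_succ]; ring
      rw [e]; exact h
    show gateOut (X (i + 1) r) (netY X U i (2 * r - 1)) (netY X U i (2 * r)) = true
    rw [hA]
    cases X (i + 1) r <;> simp [gateOut]

/-- for the network `Σ(m)` with arbitrary state `X̄` and any
node `(p,q)`, if the external input equals `Û_{(p,q)}` (defined from the state
`X̄ p q`), then the inputs of the layer-`p` nodes satisfy: if `X̄ p q = OR` then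
`(v_{pq}, w_{pq}) = (0,1)`, if `X̄ p q = YES` then `(v_{pq}, w_{pq}) = (1,1)`,
and in both cases `(v_{pj}, w_{pj}) = (0,0)` for every `j ≠ q` in layer `p`. -/
theorem stmt11 (m p q : ℕ) (hm : 1 ≤ m)
    (hp : 1 ≤ p) (hpm : p ≤ m) (hq : 1 ≤ q) (hqn : q ≤ 2 ^ (m - p))
    (X : ℕ → ℕ → GateState) (U : ℕ → Bool)
    (hU : ∀ k : ℕ, 1 ≤ k → k ≤ 2 ^ m → U k = Uhat p q (X p q) k) :
    (X p q = GateState.OR →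
      nodeV X U p q = false ∧ nodeW X U p q = true) ∧
    (X p q = GateState.YES →
      nodeV X U p q = true ∧ nodeW X U p q = true) ∧
    (∀ j : ℕ, 1 ≤ j → j ≤ 2 ^ (m - p) → j ≠ q →
      nodeV X U p j = false ∧ nodeW X U p j = false) := by
  have hspos : 0 < 2 ^ (p - 1) := Nat.pow_pos (by norm_num)
  have h2q : 2 * q ≤ 2 * 2 ^ (m - p) := by omega
  -- the ports of any layer-(p-1) block lie within 1, …, 2^m
  have hbound : ∀ a o : ℕ, a + 1 ≤ 2 * 2 ^ (m - p) → o < 2 ^ (p - 1) →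
      2 ^ (p - 1) * a + 1 + o ≤ 2 ^ m := by
    intro a o ha ho
    calc 2 ^ (p - 1) * a + 1 + o ≤ 2 ^ (p - 1) * a + 2 ^ (p - 1) := by omega
      _ = 2 ^ (p - 1) * (a + 1) := by ring
      _ ≤ 2 ^ (p - 1) * (2 * 2 ^ (m - p)) := Nat.mul_le_mul_left _ ha
      _ = 2 ^ (p - 1) * 2 ^ (m - p + 1) := by rw [← pow_succ']
      _ = 2 ^ (p - 1 + (m - p + 1)) := by rw [← pow_add]
      _ = 2 ^ m := by congr 1; omega
  -- evaluation of Uhat on a port written in block form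
  have hUval : ∀ a o : ℕ, o < 2 ^ (p - 1) →
      Uhat p q (X p q) (2 ^ (p - 1) * a + 1 + o) =
        (if a + 1 = 2 * q - 1 then
          decide (X p q = GateState.YES) && decide (o = 0)
        else if a + 1 = 2 * q then decide (o = 0) else false) := by
    intro a o ho
    unfold Uhat
    have h1 : 2 ^ (p - 1) * a + 1 + o - 1 = 2 ^ (p - 1) * a + o := by omega
    rw [h1, Nat.mul_add_div hspos, Nat.mul_add_mod, Nat.div_eq_of_lt ho,
      Nat.mod_eq_of_lt ho, Nat.add_zero]
  -- the value of U on a port in block form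
  have hUport : ∀ a o : ℕ, a + 1 ≤ 2 * 2 ^ (m - p) → o < 2 ^ (p - 1) →
      U (2 ^ (p - 1) * a + 1 + o) =
        (if a + 1 = 2 * q - 1 then
          decide (X p q = GateState.YES) && decide (o = 0)
        else if a + 1 = 2 * q then decide (o = 0) else false) := by
    intro a o ha ho
    rw [hU _ (by omega) (hbound a o ha ho), hUval a o ho]
  refine ⟨?_, ?_, ?_⟩
  · intro hOR
    constructor
    · show netY X U (p - 1) (2 * q - 1) = false
      apply netY_zero X U (p - 1) (2 * q - 1) (by omega)
      intro o ho
      rw [hUport (2 * q - 1 - 1) o (by omega) ho]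
      rw [if_pos (by omega)]
      simp [hOR]
    · show netY X U (p - 1) (2 * q) = true
      apply netY_first X U (p - 1) (2 * q) (by omega)
      have e := hUport (2 * q - 1) 0 (by omega) hspos
      rw [Nat.add_zero] at e
      rw [e, if_neg (by omega), if_pos (by omega)]
      simp
  · intro hYES
    constructor
    · show netY X U (p - 1) (2 * q - 1) = true
      apply netY_first X U (p - 1) (2 * q - 1) (by omega)
      have e := hUport (2 * q - 1 - 1) 0 (by omega) hspos
      rw [Nat.add_zero] at e
      rw [e, if_pos (by omega)]
      simp [hYES]
    · show netY X U (p - 1) (2 * q) = true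
      apply netY_first X U (p - 1) (2 * q) (by omega)
      have e := hUport (2 * q - 1) 0 (by omega) hspos
      rw [Nat.add_zero] at e
      rw [e, if_neg (by omega), if_pos (by omega)]
      simp
  · intro j hj hjn hjq
    constructor
    · show netY X U (p - 1) (2 * j - 1) = false
      apply netY_zero X U (p - 1) (2 * j - 1) (by omega)
      intro o ho
      rw [hUport (2 * j - 1 - 1) o (by omega) ho,
        if_neg (by omega), if_neg (by omega)]
    · show netY X U (p - 1) (2 * j) = false
      apply netY_zero X U (p - 1) (2 * j) (by omega)
      intro o ho
      rw [hUport (2 * j - 1) o (by omega) ho,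
        if_neg (by omega), if_neg (by omega)]
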